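/- Let (X,σ) be an indecomposable solution of multipermutational level at most 2 whose permutation group G(X) = ⟨σ_x : x ∈ X⟩ is abelian. Then G(X) is generated by at most two elements; in fact, for any e ∈ X, G(X) = ⟨σ_e, σ_{σ_e(e)}σ_e^{-1}⟩. -/

import Mathlib

/-- for an indecomposable solution of multipermutational level at most 2
with abelian permutation group, `G(X)` is generated by `σ_e` and `σ_{σ_e(e)}σ_e⁻¹`,
for any `e ∈ X`; in particular it is generated by at most two elements. -/
theorem perm_group_two_generated {X : Type*} (σ : X → Equiv.Perm X)
    (hcc : ∀ x y : X, (σ ((σ x)⁻¹ y))⁻¹ * (σ x)⁻¹ = (σ ((σ y)⁻¹ x))⁻¹ * (σ y)⁻¹)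
    (hnd : Function.Bijective fun a : X => (σ a)⁻¹ a)
    (hmp2 : ∀ x y z : X, σ (σ y x) = σ (σ z x))
    (hab : ∀ x y : X, Commute (σ x) (σ y))
    (htr : ∀ x y : X, ∃ g ∈ Subgroup.closure (Set.range σ), g x = y) :
    ∀ e : X, Subgroup.closure (Set.range σ) =
      Subgroup.closure {σ e, σ (σ e e) * (σ e)⁻¹} := by
  intro e
  set c : Equiv.Perm X := σ (σ e e) * (σ e)⁻¹ with hc
  -- σ(σ_z⁻¹ y) = σ(σ_e⁻¹ y)
  have hinv : ∀ z y : X, σ ((σ z)⁻¹ y) = σ ((σ e)⁻¹ y) := by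
    intro z y
    have h1 : ∀ u : X, σ (σ e ((σ z)⁻¹ u)) = σ u := by
      intro u
      have := hmp2 ((σ z)⁻¹ u) e z
      rw [this, Equiv.Perm.eq_inv_iff_eq.mp rfl]
    have h2 : ∀ u : X, σ ((σ z)⁻¹ (σ e u)) = σ u := by
      intro u
      have hcom : (σ z)⁻¹ * σ e = σ e * (σ z)⁻¹ := ((hab z e).inv_left).eq
      have : (σ z)⁻¹ (σ e u) = σ e ((σ z)⁻¹ u) := by
        have := congrArg (fun p : Equiv.Perm X => p u) hcom
        simpa [Equiv.Perm.mul_apply] using this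
      rw [this, h1]
    have := h2 ((σ e)⁻¹ y)
    rwa [Equiv.Perm.eq_inv_iff_eq.mp rfl] at this
  -- the key constancy lemma: σ(σ_e y) = c * σ y
  have key : ∀ y : X, σ (σ e y) = c * σ y := by
    -- first: (A) from hcc with x := e
    have hA : ∀ y : X, (σ ((σ e)⁻¹ y))⁻¹ * (σ e)⁻¹ = (σ ((σ e)⁻¹ e))⁻¹ * (σ y)⁻¹ := by
      intro y
      have := hcc e y
      rwa [hinv y e] at this
    -- (B): σ(σ_e y) = σ e * σ y * (σ ((σ e)⁻¹ e))⁻¹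
    have hB : ∀ y : X, σ (σ e y) = σ e * σ y * (σ ((σ e)⁻¹ e))⁻¹ := by
      intro y
      have := hA (σ e y)
      rw [Equiv.Perm.inv_eq_iff_eq.mpr rfl] at this
      -- this : (σ y)⁻¹ * (σ e)⁻¹ = (σ ((σ e)⁻¹ e))⁻¹ * (σ (σ e y))⁻¹
      have h' := congrArg (·⁻¹) this
      simp only [mul_inv_rev, inv_inv] at h'
      -- h' : σ e * σ y = σ (σ e y) * σ ((σ e)⁻¹ e)
      rw [h', mul_assoc, mul_inv_cancel, mul_one]
    intro y
    have hBe := hB e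
    have hBy := hB y
    set A : Equiv.Perm X := σ ((σ e)⁻¹ e) with hA'
    -- A commutes with everything in the range
    have hAy : Commute A (σ y) := hab _ _
    have hey : Commute (σ e) (σ y) := hab e y
    rw [hBy, hc]
    have : σ (σ e e) = σ e * σ e * A⁻¹ := hBe
    rw [this]
    -- goal: σ e * σ y * A⁻¹ = σ e * σ e * A⁻¹ * (σ e)⁻¹ * σ y
    have h1 : σ e * σ e * A⁻¹ * (σ e)⁻¹ = σ e * A⁻¹ := by
      have : Commute (σ e * A⁻¹) (σ e)⁻¹ :=
        (((hab e e).mul_left ((hab _ e).inv_left)).inv_right)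
      calc σ e * σ e * A⁻¹ * (σ e)⁻¹ = σ e * (σ e * A⁻¹ * (σ e)⁻¹) := by group
        _ = σ e * ((σ e)⁻¹ * (σ e * A⁻¹)) := by rw [this.eq]
        _ = σ e * A⁻¹ := by group
    rw [h1]
    calc σ e * σ y * A⁻¹ = σ e * (σ y * A⁻¹) := by rw [mul_assoc]
      _ = σ e * (A⁻¹ * σ y) := by rw [hAy.inv_left.eq]
      _ = σ e * A⁻¹ * σ y := by rw [mul_assoc]
  -- generators move σ by c
  have gen : ∀ z y : X, σ (σ z y) = c * σ y := fun z y => by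
    rw [hmp2 y z e, key y]
  -- main induction: σ (g y) * (σ y)⁻¹ ∈ zpowers c
  have main : ∀ g ∈ Subgroup.closure (Set.range σ), ∀ y : X,
      σ (g y) * (σ y)⁻¹ ∈ Subgroup.zpowers c := by
    intro g hg
    induction hg using Subgroup.closure_induction with
    | mem x hx =>
      obtain ⟨z, rfl⟩ := hx
      intro y
      rw [gen z y, mul_assoc, mul_inv_cancel, mul_one]
      exact Subgroup.mem_zpowers c
    | one => intro y; simp
    | mul x y hx hy ihx ihy =>
      intro u
      have : σ ((x * y) u) * (σ u)⁻¹ =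
          (σ (x (y u)) * (σ (y u))⁻¹) * (σ (y u) * (σ u)⁻¹) := by
        rw [Equiv.Perm.mul_apply]; group
      rw [this]
      exact mul_mem (ihx (y u)) (ihy u)
    | inv x hx ihx =>
      intro u
      have h := ihx (x⁻¹ u)
      rw [Equiv.Perm.eq_inv_iff_eq.mp rfl] at h
      have := inv_mem h
      rwa [mul_inv_rev, inv_inv] at this
  apply le_antisymm
  · rw [Subgroup.closure_le]
    rintro _ ⟨a, rfl⟩
    obtain ⟨g, hg, hge⟩ := htr e a
    have hσe : σ e ∈ Subgroup.closure {σ e, c} :=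
      Subgroup.subset_closure (Set.mem_insert _ _)
    have hcmem : c ∈ Subgroup.closure {σ e, c} :=
      Subgroup.subset_closure (Set.mem_insert_of_mem _ rfl)
    have hz : Subgroup.zpowers c ≤ Subgroup.closure {σ e, c} :=
      Subgroup.zpowers_le.2 hcmem
    have h1 : σ (g e) * (σ e)⁻¹ ∈ Subgroup.closure {σ e, c} := hz (main g hg e)
    have : σ a = (σ (g e) * (σ e)⁻¹) * σ e := by rw [hge]; group
    rw [SetLike.mem_coe, this]
    exact mul_mem h1 hσe
  · rw [Subgroup.closure_le]
    rintro x (rfl | rfl)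
    · exact Subgroup.subset_closure ⟨e, rfl⟩
    · exact mul_mem (Subgroup.subset_closure ⟨_, rfl⟩)
        (inv_mem (Subgroup.subset_closure ⟨e, rfl⟩))
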